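/- Let R_1,...,R_n, R_{n+1} be exchangeable and almost surely pairwise distinct, and define p = (1 + #{i ≤ n : R_{n+1} < R_i})/(n+1). Then for every α ∈ [0,1], P(p ≤ α) = ⌊α(n+1)⌋/(n+1). In particular P(p ≤ α) ≥ α − 1/(n+1). -/

import Mathlib

open MeasureTheory ProbabilityTheory Finset
open scoped ENNReal

namespace ConformalAux

variable {n : ℕ}

noncomputable def G (j : Fin (n+1)) (x : Fin (n+1) → ℝ) : ℕ :=
  (Finset.univ.filter fun i => x j < x i).card

lemma G_le (j : Fin (n+1)) (x : Fin (n+1) → ℝ) : G j x ≤ n := by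
  have h : (Finset.univ.filter fun i => x j < x i) ⊆ Finset.univ.erase j := by
    intro i hi
    simp only [mem_filter, mem_univ, true_and] at hi
    exact Finset.mem_erase.2 ⟨fun h => by simp [h] at hi, mem_univ _⟩
  calc G j x ≤ (Finset.univ.erase j).card := Finset.card_le_card h
    _ = n := by simp [Finset.card_erase_of_mem]

lemma G_lt (j j' : Fin (n+1)) (x : Fin (n+1) → ℝ) (h : x j < x j') :
    G j' x < G j x := by
  apply Finset.card_lt_card
  rw [Finset.ssubset_iff_of_subset]
  · exact ⟨j', by simp [h], by simp⟩
  · intro i hi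
    simp only [mem_filter, mem_univ, true_and] at hi ⊢
    exact h.trans hi

lemma G_inj (x : Fin (n+1) → ℝ) (hx : Function.Injective x) :
    Function.Injective (fun j => G j x) := by
  intro j j' h
  by_contra hne
  rcases lt_or_gt_of_ne (fun he => hne (hx he)) with hlt | hlt
  · exact absurd h (by simpa using (G_lt j j' x hlt).ne')
  · exact absurd h (by simpa using (G_lt j' j x hlt).ne)

lemma G_surj (x : Fin (n+1) → ℝ) (hx : Function.Injective x) (k : ℕ) (hk : k ≤ n) :
    ∃ j, G j x = k := by
  set F : Fin (n+1) → Fin (n+1) := fun j => ⟨G j x, Nat.lt_succ_of_le (G_le j x)⟩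
  have hF : Function.Injective F := by
    intro a b hab
    exact G_inj x hx (by simpa [F, Fin.ext_iff] using hab)
  obtain ⟨j, hj⟩ := Finite.surjective_of_injective hF ⟨k, Nat.lt_succ_of_le hk⟩
  exact ⟨j, by simpa [F, Fin.ext_iff] using hj⟩

lemma G_meas (j : Fin (n+1)) : Measurable (G j) := by
  have : G j = fun x => ∑ i : Fin (n+1), if x j < x i then 1 else 0 := by
    funext x
    rw [G, Finset.card_filter]
  rw [this]
  refine Finset.measurable_sum _ fun i _ => ?_
  exact Measurable.ite (measurableSet_lt (measurable_pi_apply j) (measurable_pi_apply i))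
    measurable_const measurable_const

lemma G_comp (σ : Equiv.Perm (Fin (n+1))) (j : Fin (n+1)) (x : Fin (n+1) → ℝ) :
    G j (x ∘ σ) = G (σ j) x := by
  unfold G
  apply Finset.card_bij (fun i _ => σ i)
  · intro a ha; simp only [mem_filter, mem_univ, true_and, Function.comp] at ha ⊢; exact ha
  · intro a _ b _ h; exact σ.injective h
  · intro b hb
    refine ⟨σ.symm b, ?_, by simp⟩
    simp only [mem_filter, mem_univ, true_and, Function.comp] at hb ⊢
    simpa using hb

end ConformalAux

open ConformalAux

/-- **Exact distribution of the conformal p-value.** Let `R 0, ..., R n` (last index the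
test point) be exchangeable and almost surely pairwise distinct, and let
`p ω = (1 + #{i < n : R (last) ω < R i ω})/(n+1)`.  Then for every `α ∈ [0,1]`,
`P(p ≤ α) = ⌊α(n+1)⌋/(n+1)`; in particular `P(p ≤ α) ≥ α − 1/(n+1)`. -/
theorem conformal_p_value_exact_distribution
    {Ω : Type*} [MeasurableSpace Ω] (μ : Measure Ω) [IsProbabilityMeasure μ]
    (n : ℕ) (R : Fin (n + 1) → Ω → ℝ)
    (hmeas : ∀ i, Measurable (R i))
    (hexch : ∀ σ : Equiv.Perm (Fin (n + 1)),
      Measure.map (fun ω => fun i => R (σ i) ω) μ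
        = Measure.map (fun ω => fun i => R i ω) μ)
    (hdistinct : μ {ω | ∃ i j : Fin (n + 1), i ≠ j ∧ R i ω = R j ω} = 0)
    (p : Ω → ℝ)
    (hp : ∀ ω, p ω =
      (1 + (Finset.univ.filter
        (fun i : Fin n => R (Fin.last n) ω < R i.castSucc ω)).card : ℝ) / (n + 1))
    (α : ℝ) (hα0 : 0 ≤ α) (hα1 : α ≤ 1) :
    μ {ω | p ω ≤ α} = ENNReal.ofReal ((⌊α * (n + 1)⌋ : ℝ) / (n + 1)) ∧
      ENNReal.ofReal (α - 1 / (n + 1)) ≤ μ {ω | p ω ≤ α} := by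
  classical
  set emb : Ω → (Fin (n+1) → ℝ) := fun ω i => R i ω with hemb
  have hembm : Measurable emb := measurable_pi_lambda _ hmeas
  set ν : Measure (Fin (n+1) → ℝ) := Measure.map emb μ with hν
  have hνprob : IsProbabilityMeasure ν := Measure.isProbabilityMeasure_map hembm.aemeasurable
  -- invariance of ν under permutations
  have hinv : ∀ σ : Equiv.Perm (Fin (n+1)),
      Measure.map (fun x : Fin (n+1) → ℝ => x ∘ σ) ν = ν := by
    intro σ
    have hTm : Measurable (fun x : Fin (n+1) → ℝ => x ∘ σ) :=
      measurable_pi_lambda _ fun i => measurable_pi_apply (σ i)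
    rw [hν, Measure.map_map hTm hembm]
    exact hexch σ
  -- the bad (non-injective) set is null
  have hbadm : MeasurableSet {x : Fin (n+1) → ℝ | ¬ Function.Injective x} := by
    have : {x : Fin (n+1) → ℝ | ¬ Function.Injective x}
        = ⋃ i, ⋃ j, ⋃ (_ : i ≠ j), {x : Fin (n+1) → ℝ | x i = x j} := by
      ext x
      simp only [Set.mem_setOf_eq, Function.not_injective_iff, Set.mem_iUnion]
      tauto
    rw [this]
    exact MeasurableSet.iUnion fun i => MeasurableSet.iUnion fun j =>
      MeasurableSet.iUnion fun _ =>
        measurableSet_eq_fun (measurable_pi_apply i) (measurable_pi_apply j)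
  have hνbad : ν {x : Fin (n+1) → ℝ | ¬ Function.Injective x} = 0 := by
    rw [hν, Measure.map_apply hembm hbadm]
    refine measure_mono_null ?_ hdistinct
    intro ω hω
    simp only [Set.mem_preimage, Set.mem_setOf_eq, Function.not_injective_iff] at hω ⊢
    obtain ⟨i, j, hij, hne⟩ := hω
    exact ⟨i, j, hne, hij⟩
  have hGset : ∀ (j : Fin (n+1)) (k : ℕ),
      MeasurableSet {x : Fin (n+1) → ℝ | G j x = k} :=
    fun j k => (G_meas j) (measurableSet_singleton k)
  -- uniform distribution of the rank
  have huni : ∀ k : ℕ, k ≤ n →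
      ν {x : Fin (n+1) → ℝ | G (Fin.last n) x = k} = ((n : ℝ≥0∞) + 1)⁻¹ := by
    intro k hk
    have hswap : ∀ j : Fin (n+1),
        ν {x : Fin (n+1) → ℝ | G j x = k}
          = ν {x : Fin (n+1) → ℝ | G (Fin.last n) x = k} := by
      intro j
      set σ := Equiv.swap j (Fin.last n) with hσ
      have hTm : Measurable (fun x : Fin (n+1) → ℝ => x ∘ σ) :=
        measurable_pi_lambda _ fun i => measurable_pi_apply (σ i)
      have hpre : (fun x : Fin (n+1) → ℝ => x ∘ σ) ⁻¹' {x | G (Fin.last n) x = k}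
          = {x : Fin (n+1) → ℝ | G j x = k} := by
        ext x
        simp only [Set.mem_preimage, Set.mem_setOf_eq]
        rw [G_comp σ (Fin.last n) x, hσ, Equiv.swap_apply_right]
      calc ν {x : Fin (n+1) → ℝ | G j x = k}
          = ν ((fun x : Fin (n+1) → ℝ => x ∘ σ) ⁻¹' {x | G (Fin.last n) x = k}) := by
            rw [hpre]
        _ = (Measure.map (fun x : Fin (n+1) → ℝ => x ∘ σ) ν)
              {x | G (Fin.last n) x = k} := (Measure.map_apply hTm (hGset _ k)).symm
        _ = ν {x : Fin (n+1) → ℝ | G (Fin.last n) x = k} := by rw [hinv σ]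
    -- partition of the injective set
    set I : Set (Fin (n+1) → ℝ) := {x | Function.Injective x} with hI
    set S : Fin (n+1) → Set (Fin (n+1) → ℝ) := fun j => {x | G j x = k} ∩ I with hS
    have hIm : MeasurableSet I := by
      have := hbadm.compl
      simpa [hI, Set.compl_setOf] using this
    have hSm : ∀ j, MeasurableSet (S j) := fun j => (hGset j k).inter hIm
    have hνI : ν I = 1 := by
      have h1 : ν Set.univ ≤ ν I + ν Iᶜ := by
        rw [← Set.union_compl_self I]; exact measure_union_le _ _
      have h2 : ν Iᶜ = 0 := hνbad
      rw [h2, add_zero, measure_univ] at h1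
      exact le_antisymm prob_le_one h1
    have hcover : I = ⋃ j, S j := by
      ext x
      simp only [hS, Set.mem_iUnion, Set.mem_inter_iff, Set.mem_setOf_eq]
      constructor
      · intro hx
        obtain ⟨j, hj⟩ := G_surj x hx k hk
        exact ⟨j, hj, hx⟩
      · rintro ⟨j, _, hx⟩; exact hx
    have hdisj : Pairwise (Function.onFun Disjoint S) := by
      intro j j' hjj'
      refine Set.disjoint_left.2 ?_
      rintro x ⟨hx1, hx2⟩ ⟨hy1, hy2⟩
      exact hjj' (G_inj x hx2 (hx1.trans hy1.symm))
    have hsum : ∑ j : Fin (n+1), ν (S j) = 1 := by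
      rw [← tsum_fintype (L := SummationFilter.unconditional _), ← measure_iUnion hdisj hSm, ← hcover, hνI]
    have hSj : ∀ j, ν (S j) = ν {x : Fin (n+1) → ℝ | G j x = k} := by
      intro j
      have : S j = {x : Fin (n+1) → ℝ | G j x = k} \ {x | ¬ Function.Injective x} := by
        ext x
        simp only [hS, hI, Set.mem_inter_iff, Set.mem_setOf_eq, Set.mem_diff, not_not]
      rw [this, measure_diff_null hνbad]
    have hconst : ∑ j : Fin (n+1), ν (S j)
        = ((n : ℝ≥0∞) + 1) * ν {x : Fin (n+1) → ℝ | G (Fin.last n) x = k} := by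
      have : ∀ j : Fin (n+1), ν (S j)
          = ν {x : Fin (n+1) → ℝ | G (Fin.last n) x = k} := fun j =>
        (hSj j).trans (hswap j)
      rw [Finset.sum_congr rfl fun j _ => this j, Finset.sum_const, Finset.card_univ,
        Fintype.card_fin, nsmul_eq_mul]
      push_cast
      ring
    rw [hconst] at hsum
    have hne : ((n : ℝ≥0∞) + 1) ≠ 0 := by simp
    have hnt : ((n : ℝ≥0∞) + 1) ≠ ⊤ := by
      simp [ENNReal.add_eq_top]
    calc ν {x : Fin (n+1) → ℝ | G (Fin.last n) x = k}
        = ((n : ℝ≥0∞) + 1)⁻¹ * (((n : ℝ≥0∞) + 1)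
            * ν {x : Fin (n+1) → ℝ | G (Fin.last n) x = k}) := by
          rw [← mul_assoc, ENNReal.inv_mul_cancel hne hnt, one_mul]
      _ = ((n : ℝ≥0∞) + 1)⁻¹ := by rw [hsum, mul_one]
  -- translate the event
  set m : ℕ := (⌊α * (n + 1)⌋).toNat with hm
  have hfloor_nonneg : (0 : ℤ) ≤ ⌊α * (n + 1)⌋ := by
    apply Int.floor_nonneg.2
    positivity
  have hmcast : (m : ℤ) = ⌊α * (n + 1)⌋ := Int.toNat_of_nonneg hfloor_nonneg
  have hmle : m ≤ n + 1 := by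
    have h0 : ((⌊α * (n + 1)⌋ : ℝ)) ≤ ((n : ℝ) + 1) := by
      refine le_trans (Int.floor_le _) ?_
      nlinarith
    have h1 : (⌊α * (n + 1)⌋ : ℤ) ≤ (n : ℤ) + 1 := by exact_mod_cast h0
    omega
  have hKcard : ∀ ω, (Finset.univ.filter
      (fun i : Fin n => R (Fin.last n) ω < R i.castSucc ω)).card
        = G (Fin.last n) (emb ω) := by
    intro ω
    rw [G]
    rw [show (Finset.univ.filter fun i : Fin (n+1) => emb ω (Fin.last n) < emb ω i)
        = (Finset.univ.filter fun i : Fin n => R (Fin.last n) ω < R i.castSucc ω).map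
            ⟨Fin.castSucc, Fin.castSucc_injective n⟩ from ?_, Finset.card_map]
    ext i
    simp only [Finset.mem_filter, Finset.mem_univ, true_and, Finset.mem_map,
      Function.Embedding.coeFn_mk]
    constructor
    · intro h
      have hne : i ≠ Fin.last n := by rintro rfl; exact lt_irrefl _ h
      obtain ⟨i', rfl⟩ := Fin.exists_castSucc_eq.2 hne
      exact ⟨i', h, rfl⟩
    · rintro ⟨i', h, rfl⟩; exact h
  have hpos : (0:ℝ) < (n:ℝ) + 1 := by positivity
  have hevent : {ω | p ω ≤ α} = emb ⁻¹' {x | G (Fin.last n) x < m} := by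
    ext ω
    simp only [Set.mem_setOf_eq, Set.mem_preimage]
    rw [hp ω, hKcard ω]
    set K := G (Fin.last n) (emb ω) with hK
    rw [div_le_iff₀ hpos]
    constructor
    · intro h
      have h1 : ((1 + K : ℤ) : ℝ) ≤ α * ((n:ℝ)+1) := by push_cast; push_cast at h; linarith
      have h2 : (1 + K : ℤ) ≤ ⌊α * ((n:ℝ)+1)⌋ := Int.le_floor.2 h1
      have h3 : (K:ℤ) < (m:ℤ) := by rw [hmcast]; omega
      omega
    · intro h
      have h1 : (1 + K : ℤ) ≤ ⌊α * ((n:ℝ)+1)⌋ := by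
        rw [← hmcast]; omega
      have h2 := Int.le_floor.1 h1
      push_cast at h2 ⊢
      linarith
  have hmset : MeasurableSet {x : Fin (n+1) → ℝ | G (Fin.last n) x < m} :=
    (G_meas (Fin.last n)) measurableSet_Iio
  have hμν : μ {ω | p ω ≤ α} = ν {x : Fin (n+1) → ℝ | G (Fin.last n) x < m} := by
    rw [hevent, hν, Measure.map_apply hembm hmset]
  have hlt : {x : Fin (n+1) → ℝ | G (Fin.last n) x < m}
      = ⋃ k ∈ Finset.range m, {x : Fin (n+1) → ℝ | G (Fin.last n) x = k} := by
    ext x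
    simp only [Set.mem_setOf_eq, Set.mem_iUnion, Finset.mem_range, exists_prop]
    constructor
    · intro h; exact ⟨_, h, rfl⟩
    · rintro ⟨k, hk, hGk⟩; omega
  have hval : ν {x : Fin (n+1) → ℝ | G (Fin.last n) x < m}
      = (m : ℝ≥0∞) * ((n : ℝ≥0∞) + 1)⁻¹ := by
    rw [hlt, measure_biUnion_finset ?disj (fun k _ => hGset _ k)]
    · rw [Finset.sum_congr rfl fun k hk => huni k (by
        have := Finset.mem_range.1 hk; omega)]
      rw [Finset.sum_const, Finset.card_range, nsmul_eq_mul]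
    case disj =>
      intro a ha b hb hab
      refine Set.disjoint_left.2 ?_
      rintro x hx1 hx2
      simp only [Set.mem_setOf_eq] at hx1 hx2
      exact hab (hx1 ▸ hx2 ▸ rfl)
  have heq : μ {ω | p ω ≤ α} = ENNReal.ofReal ((⌊α * (n + 1)⌋ : ℝ) / (n + 1)) := by
    rw [hμν, hval]
    have hm' : ((⌊α * ((n:ℝ) + 1)⌋ : ℝ)) = (m : ℝ) := by exact_mod_cast hmcast.symm
    rw [hm', ENNReal.ofReal_div_of_pos hpos, div_eq_mul_inv]
    congr 1
    · exact (ENNReal.ofReal_natCast m).symm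
    · congr 1
      rw [ENNReal.ofReal_add (by positivity) zero_le_one, ENNReal.ofReal_natCast,
        ENNReal.ofReal_one]
  refine ⟨heq, ?_⟩
  rw [heq]
  apply ENNReal.ofReal_le_ofReal
  have hf : α * ((n:ℝ)+1) - 1 ≤ (⌊α * ((n:ℝ)+1)⌋ : ℝ) := (Int.sub_one_lt_floor _).le
  have hrw : α - 1/((n:ℝ)+1) = (α * ((n:ℝ)+1) - 1)/((n:ℝ)+1) := by field_simp
  rw [hrw]
  gcongr
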